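/- Let R = K[x_1,...,x_n] with char(K) = 0 and I a monomial ideal such that A = R/I is Artinian and level of socle degree t. Then for ℓ = x_1 + ... + x_n and any k < t/2, the map ×ℓ : A_k → A_{k+1} is injective. -/

import Mathlib

open MvPolynomial

namespace LevelAux

variable {n : ℕ} {K : Type*} [Field K] [CharZero K]

def deg {n : ℕ} (b : Fin n →₀ ℕ) : ℕ := ∑ j : Fin n, b j

lemma degree_eq_deg {n : ℕ} (b : Fin n →₀ ℕ) : b.degree = deg b := by
  rw [Finsupp.degree, deg]
  exact Finset.sum_subset (Finset.subset_univ _)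
    (by intro x _ hx; simpa using Finsupp.notMem_support_iff.mp hx)

def fac {n : ℕ} (b : Fin n →₀ ℕ) : ℕ := ∏ j : Fin n, (b j).factorial

lemma fac_ne_zero {n : ℕ} (b : Fin n →₀ ℕ) : fac b ≠ 0 :=
  Finset.prod_ne_zero_iff.mpr fun i _ => (Nat.factorial_pos _).ne'

lemma deg_add_single {n : ℕ} (b : Fin n →₀ ℕ) (i : Fin n) :
    deg (b + Finsupp.single i 1) = deg b + 1 := by
  rw [deg, deg]
  have h1 : ∀ j : Fin n, ((b + Finsupp.single i 1 : Fin n →₀ ℕ)) j = b j + (if i = j then 1 else 0) := by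
    intro j; rw [Finsupp.add_apply, Finsupp.single_apply]
  rw [Finset.sum_congr rfl fun j _ => h1 j, Finset.sum_add_distrib]
  simp

lemma fac_add_single {n : ℕ} (b : Fin n →₀ ℕ) (i : Fin n) :
    fac (b + Finsupp.single i 1) = fac b * (b i + 1) := by
  rw [fac, fac, ← Finset.prod_erase_mul Finset.univ _ (Finset.mem_univ i),
    ← Finset.prod_erase_mul Finset.univ _ (Finset.mem_univ i)]
  have h1 : ∀ x ∈ Finset.univ.erase i,
      (((b + Finsupp.single i 1 : Fin n →₀ ℕ)) x).factorial = (b x).factorial := by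
    intro x hx
    have : x ≠ i := (Finset.mem_erase.mp hx).1
    rw [Finsupp.add_apply, Finsupp.single_apply, if_neg (Ne.symm this)]
    simp
  rw [Finset.prod_congr rfl h1]
  have h2 : ((b + Finsupp.single i 1 : Fin n →₀ ℕ)) i = b i + 1 := by
    rw [Finsupp.add_apply, Finsupp.single_apply, if_pos rfl]
  rw [h2, Nat.factorial_succ]
  ring

lemma add_sub_cancel'' {n : ℕ} (b : Fin n →₀ ℕ) (i : Fin n) :
    b + Finsupp.single i 1 - Finsupp.single i 1 = b := by
  ext j; simp [Finsupp.tsub_apply, Finsupp.single_apply]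

lemma sub_add_cancel'' {n : ℕ} (b : Fin n →₀ ℕ) (i : Fin n) (h : b i ≠ 0) :
    b - Finsupp.single i 1 + Finsupp.single i 1 = b := by
  ext j; simp only [Finsupp.add_apply, Finsupp.tsub_apply, Finsupp.single_apply]
  split_ifs with hij
  · subst hij; omega
  · omega

lemma add_sub_comm'' {n : ℕ} (b : Fin n →₀ ℕ) (i j : Fin n) (h : b j ≠ 0) :
    b + Finsupp.single i 1 - Finsupp.single j 1
      = b - Finsupp.single j 1 + Finsupp.single i 1 := by
  ext x
  rcases eq_or_ne j x with rfl | hjx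
  · simp only [Finsupp.add_apply, Finsupp.tsub_apply, Finsupp.single_apply, if_pos rfl]
    split_ifs <;> omega
  · simp only [Finsupp.add_apply, Finsupp.tsub_apply, Finsupp.single_apply, if_neg hjx]
    split_ifs <;> omega

noncomputable def Dop (n : ℕ) (K : Type*) [Field K] :
    ((Fin n →₀ ℕ) → K) →ₗ[K] ((Fin n →₀ ℕ) → K) where
  toFun w := fun b => ∑ i : Fin n, ((b i : K) + 1) * w (b + Finsupp.single i 1)
  map_add' w v := by
    funext b
    simp only [Pi.add_apply, mul_add, Finset.sum_add_distrib]
  map_smul' a w := by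
    funext b
    simp only [Pi.smul_apply, smul_eq_mul, RingHom.id_apply, Finset.mul_sum]
    exact Finset.sum_congr rfl fun i _ => by ring

noncomputable def Uop (m : Fin n →₀ ℕ) (K : Type*) [Field K] :
    ((Fin n →₀ ℕ) → K) →ₗ[K] ((Fin n →₀ ℕ) → K) where
  toFun w := fun b => ∑ i : Fin n,
    ((m i : K) - (b i : K) + 1) * (if b i = 0 then 0 else w (b - Finsupp.single i 1))
  map_add' w v := by
    funext b
    simp only [Pi.add_apply]
    rw [← Finset.sum_add_distrib]
    refine Finset.sum_congr rfl fun i _ => ?_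
    split_ifs <;> simp [mul_add]
  map_smul' a w := by
    funext b
    simp only [Pi.smul_apply, smul_eq_mul, RingHom.id_apply, Finset.mul_sum]
    refine Finset.sum_congr rfl fun i _ => ?_
    split_ifs <;> ring

lemma Dop_apply (w : (Fin n →₀ ℕ) → K) (b : Fin n →₀ ℕ) :
    Dop n K w b = ∑ i : Fin n, ((b i : K) + 1) * w (b + Finsupp.single i 1) := rfl

lemma Uop_apply (m : Fin n →₀ ℕ) (w : (Fin n →₀ ℕ) → K) (b : Fin n →₀ ℕ) :
    Uop m K w b = ∑ i : Fin n,
      ((m i : K) - (b i : K) + 1)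
        * (if b i = 0 then 0 else w (b - Finsupp.single i 1)) := rfl

noncomputable def Fterm (m b : Fin n →₀ ℕ) (w : (Fin n →₀ ℕ) → K) (i j : Fin n) : K :=
  ((b i : K) + 1) *
    (((m j : K) - (((b + Finsupp.single i 1 : Fin n →₀ ℕ) j : ℕ) : K) + 1) *
      (if (b + Finsupp.single i 1 : Fin n →₀ ℕ) j = 0 then 0
        else w (b + Finsupp.single i 1 - Finsupp.single j 1)))

noncomputable def Gterm (m b : Fin n →₀ ℕ) (w : (Fin n →₀ ℕ) → K) (j i : Fin n) : K :=
  ((m j : K) - (b j : K) + 1) *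
    (if b j = 0 then 0
      else ((((b - Finsupp.single j 1 : Fin n →₀ ℕ) i : ℕ) : K) + 1) *
        w (b - Finsupp.single j 1 + Finsupp.single i 1))

lemma hL (m b : Fin n →₀ ℕ) (w : (Fin n →₀ ℕ) → K) :
    Dop n K (Uop m K w) b = ∑ i : Fin n, ∑ j : Fin n, Fterm m b w i j := by
  rw [Dop_apply]
  refine Finset.sum_congr rfl fun i _ => ?_
  rw [Uop_apply, Finset.mul_sum]
  exact Finset.sum_congr rfl fun j _ => by rw [Fterm]

lemma hR (m b : Fin n →₀ ℕ) (w : (Fin n →₀ ℕ) → K) :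
    Uop m K (Dop n K w) b = ∑ j : Fin n, ∑ i : Fin n, Gterm m b w j i := by
  rw [Uop_apply]
  refine Finset.sum_congr rfl fun j _ => ?_
  by_cases hbj : b j = 0
  · simp [Gterm, hbj]
  · rw [if_neg hbj, Dop_apply, Finset.mul_sum]
    exact Finset.sum_congr rfl fun i _ => by rw [Gterm, if_neg hbj]

lemma offdiag (m b : Fin n →₀ ℕ) (w : (Fin n →₀ ℕ) → K) (i j : Fin n) (hij : i ≠ j) :
    Fterm m b w i j = Gterm m b w j i := by
  have h1 : (b + Finsupp.single i 1 : Fin n →₀ ℕ) j = b j := by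
    rw [Finsupp.add_apply, Finsupp.single_apply, if_neg hij]
    omega
  have h2 : ((b - Finsupp.single j 1 : Fin n →₀ ℕ)) i = b i := by
    rw [Finsupp.tsub_apply, Finsupp.single_apply, if_neg (Ne.symm hij)]
    omega
  rw [Fterm, Gterm, h1, h2]
  by_cases hbj : b j = 0
  · simp [hbj]
  · rw [if_neg hbj, if_neg hbj, add_sub_comm'' b i j hbj]
    ring

lemma diagdiff (m b : Fin n →₀ ℕ) (w : (Fin n →₀ ℕ) → K) (i : Fin n) :
    Fterm m b w i i - Gterm m b w i i = ((m i : K) - 2 * (b i : K)) * w b := by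
  have h1 : (b + Finsupp.single i 1 : Fin n →₀ ℕ) i = b i + 1 := by
    rw [Finsupp.add_apply, Finsupp.single_apply, if_pos rfl]
  rw [Fterm, Gterm, h1, if_neg (by omega), add_sub_cancel'' b i]
  by_cases hbi : b i = 0
  · rw [if_pos hbi, hbi]
    push_cast
    ring
  · have h2 : ((b - Finsupp.single i 1 : Fin n →₀ ℕ)) i = b i - 1 := by
      rw [Finsupp.tsub_apply, Finsupp.single_apply, if_pos rfl]
    have h3 : (1 : ℕ) ≤ b i := Nat.one_le_iff_ne_zero.mpr hbi
    rw [if_neg hbi, h2, sub_add_cancel'' b i hbi]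
    push_cast [Nat.cast_sub h3]
    ring

lemma comm_apply (m : Fin n →₀ ℕ) (w : (Fin n →₀ ℕ) → K) (b : Fin n →₀ ℕ) :
    Dop n K (Uop m K w) b
      = Uop m K (Dop n K w) b + ((deg m : K) - 2 * (deg b : K)) * w b := by
  have hsub : Dop n K (Uop m K w) b - Uop m K (Dop n K w) b
      = ((deg m : K) - 2 * (deg b : K)) * w b := by
    rw [hL, hR, show (∑ j : Fin n, ∑ i : Fin n, Gterm m b w j i)
        = ∑ i : Fin n, ∑ j : Fin n, Gterm m b w j i from Finset.sum_comm,
      ← Finset.sum_sub_distrib]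
    have hptw : ∀ i : Fin n,
        (∑ j : Fin n, Fterm m b w i j) - (∑ j : Fin n, Gterm m b w j i)
          = ((m i : K) - 2 * (b i : K)) * w b := by
      intro i
      rw [← Finset.sum_sub_distrib]
      rw [Finset.sum_eq_single_of_mem i (Finset.mem_univ i)
        (fun j _ hj => by rw [offdiag m b w i j (Ne.symm hj), sub_self])]
      exact diagdiff m b w i
    rw [Finset.sum_congr rfl fun i _ => hptw i, ← Finset.sum_mul]
    congr 1
    rw [Finset.sum_sub_distrib, deg, deg]
    push_cast
    rw [Finset.mul_sum]
  linear_combination hsub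

def box {n : ℕ} (m : Fin n →₀ ℕ) (k : ℕ) : Set (Fin n →₀ ℕ) := {b | b ≤ m ∧ deg b = k}

lemma Dop_supp {m : Fin n →₀ ℕ} {k : ℕ} {w : (Fin n →₀ ℕ) → K}
    (hw : ∀ b, w b ≠ 0 → b ∈ box m (k+1)) :
    ∀ b, Dop n K w b ≠ 0 → b ∈ box m k := by
  intro b hb
  rw [Dop_apply] at hb
  obtain ⟨i, -, hi⟩ := Finset.exists_ne_zero_of_sum_ne_zero hb
  have hwi : w (b + Finsupp.single i 1) ≠ 0 := fun h => hi (by rw [h, mul_zero])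
  obtain ⟨hle, hdeg⟩ := hw _ hwi
  constructor
  · exact le_trans (le_add_of_nonneg_right zero_le) hle
  · rw [deg_add_single] at hdeg; omega

lemma Uop_supp {m : Fin n →₀ ℕ} {k : ℕ} {w : (Fin n →₀ ℕ) → K}
    (hw : ∀ b, w b ≠ 0 → b ∈ box m k) :
    ∀ b, Uop m K w b ≠ 0 → b ∈ box m (k+1) := by
  intro b hb
  rw [Uop_apply] at hb
  obtain ⟨i, -, hi⟩ := Finset.exists_ne_zero_of_sum_ne_zero hb
  have hco : ((m i : K) - (b i : K) + 1) ≠ 0 := fun h => hi (by rw [h, zero_mul])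
  have hbi : b i ≠ 0 := by
    intro h; exact hi (by rw [if_pos h, mul_zero])
  have hwi : w (b - Finsupp.single i 1) ≠ 0 := by
    intro h; exact hi (by rw [if_neg hbi, h, mul_zero])
  obtain ⟨hle, hdeg⟩ := hw _ hwi
  have hsubi : ((b - Finsupp.single i 1 : Fin n →₀ ℕ)) i = b i - 1 := by
    rw [Finsupp.tsub_apply, Finsupp.single_apply, if_pos rfl]
  constructor
  · intro x
    rcases eq_or_ne x i with rfl | hxi
    · have h1 : b x - 1 ≤ m x := by rw [← hsubi]; exact hle x
      by_contra hgt
      have hbx : b x = m x + 1 := by omega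
      apply hco
      rw [hbx]; push_cast; ring
    · have : ((b - Finsupp.single i 1 : Fin n →₀ ℕ)) x = b x := by
        rw [Finsupp.tsub_apply, Finsupp.single_apply, if_neg (Ne.symm hxi)]
        omega
      rw [← this]; exact hle x
  · rw [← sub_add_cancel'' b i hbi, deg_add_single, hdeg]

lemma eig (m : Fin n →₀ ℕ) :
    ∀ j : ℕ, 2 * j ≤ deg m → ∀ w : (Fin n →₀ ℕ) → K, ∀ lam : K,
      (∀ b, w b ≠ 0 → b ∈ box m j) → w ≠ 0 →
      (∀ b, Uop m K (Dop n K w) b = lam * w b) → ∃ N : ℕ, lam = N := by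
  intro j
  induction j with
  | zero =>
    intro _ w lam hsupp hne heig
    have hD : Dop n K w = 0 := by
      funext b
      rw [Dop_apply]
      apply Finset.sum_eq_zero
      intro i _
      have hz : w (b + Finsupp.single i 1) = 0 := by
        by_contra h
        have := (hsupp _ h).2
        rw [deg_add_single] at this
        omega
      rw [hz, mul_zero]
    obtain ⟨b, hb⟩ := Function.ne_iff.mp hne
    have := heig b
    rw [hD, map_zero] at this
    simp only [Pi.zero_apply] at this
    refine ⟨0, ?_⟩
    have hbne : w b ≠ 0 := by simpa using hb
    have : lam * w b = 0 := this.symm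
    rcases mul_eq_zero.mp this with h | h
    · simp [h]
    · exact absurd h hbne
  | succ j ih =>
    intro hdeg w lam hsupp hne heig
    have hsupp' : ∀ b, Dop n K w b ≠ 0 → b ∈ box m j := Dop_supp hsupp
    by_cases hw' : Dop n K w = (0 : (Fin n →₀ ℕ) → K)
    · obtain ⟨b, hb⟩ := Function.ne_iff.mp hne
      have hbne : w b ≠ 0 := by simpa using hb
      have := heig b
      rw [hw', map_zero] at this
      simp only [Pi.zero_apply] at this
      refine ⟨0, ?_⟩
      rcases mul_eq_zero.mp this.symm with h | h
      · simp [h]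
      · exact absurd h hbne
    · have hUw' : Uop m K (Dop n K w) = lam • w := by
        funext b; rw [heig b]; rfl
      have hDU : ∀ b, Dop n K (Uop m K (Dop n K w)) b = lam * Dop n K w b := by
        intro b
        rw [hUw', map_smul]
        rfl
      have heig' : ∀ b, Uop m K (Dop n K (Dop n K w)) b
          = (lam - ((deg m : K) - 2 * (j : K))) * Dop n K w b := by
        intro b
        have hc := comm_apply m (Dop n K w) b
        have h2 := hDU b
        by_cases hb : Dop n K w b = 0
        · rw [hb, mul_zero] at h2 ⊢
          rw [hb, mul_zero, add_zero] at hc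
          rw [← hc, h2]
        · have hdb : deg b = j := (hsupp' b hb).2
          rw [hdb] at hc
          linear_combination h2 - hc
      obtain ⟨N, hN⟩ := ih (by omega) (Dop n K w) (lam - ((deg m : K) - 2 * (j : K)))
        hsupp' hw' heig'
      refine ⟨N + (deg m - 2 * j), ?_⟩
      have h2j : 2 * j ≤ deg m := by omega
      push_cast [Nat.cast_sub h2j]
      linear_combination hN

def Wmod (m : Fin n →₀ ℕ) (k : ℕ) (K : Type*) [Field K] :
    Submodule K ((Fin n →₀ ℕ) → K) where
  carrier := {w | ∀ b, w b ≠ 0 → b ∈ box m k}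
  add_mem' := by
    intro w v hw hv b hb
    by_cases h : w b = 0
    · exact hv b (by simpa [h] using hb)
    · exact hw b h
  zero_mem' := fun b hb => absurd rfl hb
  smul_mem' := by
    intro c w hw b hb
    refine hw b fun h => hb ?_
    simp [h]

lemma mem_Wmod {m : Fin n →₀ ℕ} {k : ℕ} {w : (Fin n →₀ ℕ) → K} :
    w ∈ Wmod m k K ↔ ∀ b, w b ≠ 0 → b ∈ box m k := Iff.rfl

noncomputable instance (m : Fin n →₀ ℕ) (k : ℕ) :
    FiniteDimensional K (Wmod m k K) := by
  classical
  refine FiniteDimensional.of_injective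
    (V₂ := (↥(Finset.Iic m) → K))
    { toFun := fun w x => w.1 x.1
      map_add' := fun w v => rfl
      map_smul' := fun c w => rfl } ?_
  intro w v hwv
  apply Subtype.ext
  funext b
  by_cases hb : b ≤ m
  · exact congrFun hwv ⟨b, Finset.mem_Iic.mpr hb⟩
  · have h1 : w.1 b = 0 := by
      by_contra h; exact hb (w.2 b h).1
    have h2 : v.1 b = 0 := by
      by_contra h; exact hb (v.2 b h).1
    rw [h1, h2]

lemma exists_w (m : Fin n →₀ ℕ) (k : ℕ) (h2k : 2 * k < deg m) (u : Fin n →₀ ℕ)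
    (hu : u ∈ box m k) :
    ∃ w : (Fin n →₀ ℕ) → K, (∀ b, w b ≠ 0 → b ∈ box m (k+1)) ∧
      ∀ b, Dop n K w b = (if b = u then 1 else 0) := by
  classical
  let T : Wmod m k K →ₗ[K] Wmod m k K :=
    { toFun := fun w => ⟨Dop n K (Uop m K w.1), Dop_supp (Uop_supp w.2)⟩
      map_add' := by intro w v; apply Subtype.ext; simp [map_add]
      map_smul' := by intro c w; apply Subtype.ext; simp [map_smul] }
  have hinj : Function.Injective T := by
    rw [injective_iff_map_eq_zero]
    intro w hw
    have hDU : ∀ b, Dop n K (Uop m K w.1) b = 0 :=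
      fun b => congrFun (congrArg Subtype.val hw) b
    apply Subtype.ext
    by_contra hne
    have hne' : w.1 ≠ 0 := by simpa using hne
    have heig : ∀ b, Uop m K (Dop n K w.1) b
        = (-((deg m : K) - 2 * (k : K))) * w.1 b := by
      intro b
      have hc := comm_apply m w.1 b
      rw [hDU b] at hc
      by_cases hb : w.1 b = 0
      · rw [hb, mul_zero]
        rw [hb, mul_zero, add_zero] at hc
        exact hc.symm
      · have hdb : deg b = k := (w.2 b hb).2
        rw [hdb] at hc
        linear_combination -hc
    obtain ⟨N, hN⟩ := eig m k (by omega) w.1 _ w.2 hne' heig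
    have h2k' : 2 * k ≤ deg m := by omega
    have hz : ((N + (deg m - 2 * k) : ℕ) : K) = 0 := by
      push_cast [Nat.cast_sub h2k']
      linear_combination -hN
    have := Nat.cast_eq_zero.mp hz
    omega
  have hsurj := (LinearMap.injective_iff_surjective).mp hinj
  have hδ : (fun b => if b = u then (1:K) else 0) ∈ Wmod m k K := by
    intro b hb
    by_cases h : b = u
    · subst h; exact hu
    · simp only [if_neg h] at hb; exact absurd rfl hb
  obtain ⟨z, hz⟩ := hsurj ⟨_, hδ⟩
  refine ⟨Uop m K z.1, Uop_supp z.2, fun b => ?_⟩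
  exact congrFun (congrArg Subtype.val hz) b

lemma coeff_ell_mul (f : MvPolynomial (Fin n) K) (b : Fin n →₀ ℕ) :
    coeff b ((∑ j : Fin n, X j) * f)
      = ∑ j : Fin n, (if j ∈ b.support then coeff (b - Finsupp.single j 1) f else 0) := by
  rw [Finset.sum_mul, coeff_sum]
  exact Finset.sum_congr rfl fun j _ => by rw [mul_comm, coeff_mul_X']

lemma pairing_key (m : Fin n →₀ ℕ) (f : MvPolynomial (Fin n) K) (w : (Fin n →₀ ℕ) → K)
    (hw : ∀ b, w b ≠ 0 → b ≤ m) (j : Fin n) :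
    ∑ b ∈ Finset.Iic m, (if j ∈ b.support
        then (fac b : K) * coeff (b - Finsupp.single j 1) f * w b else 0)
      = ∑ a ∈ Finset.Iic m, (fac a : K) * coeff a f
          * (((a j : K) + 1) * w (a + Finsupp.single j 1)) := by
  classical
  rw [← Finset.sum_filter]
  rw [← Finset.sum_filter_add_sum_filter_not (Finset.Iic m) (fun a => a j < m j)]
  have hzero : ∑ a ∈ (Finset.Iic m).filter (fun a => ¬ a j < m j),
      (fac a : K) * coeff a f * (((a j : K) + 1) * w (a + Finsupp.single j 1)) = 0 := by
    refine Finset.sum_eq_zero fun a ha => ?_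
    obtain ⟨ham, hnot⟩ := Finset.mem_filter.mp ha
    have ham' : a ≤ m := Finset.mem_Iic.mp ham
    have hwz : w (a + Finsupp.single j 1) = 0 := by
      by_contra h
      have hle := hw _ h
      have : ((a + Finsupp.single j 1 : Fin n →₀ ℕ)) j ≤ m j := hle j
      rw [Finsupp.add_apply, Finsupp.single_apply, if_pos rfl] at this
      omega
    rw [hwz, mul_zero, mul_zero]
  rw [hzero, add_zero]
  refine Finset.sum_bij' (fun b _ => b - Finsupp.single j 1)
    (fun a _ => a + Finsupp.single j 1) ?_ ?_ ?_ ?_ ?_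
  · intro b hb
    obtain ⟨hbm, hbs⟩ := Finset.mem_filter.mp hb
    have hbm' : b ≤ m := Finset.mem_Iic.mp hbm
    have hbj : b j ≠ 0 := Finsupp.mem_support_iff.mp hbs
    refine Finset.mem_filter.mpr ⟨Finset.mem_Iic.mpr (le_trans tsub_le_self hbm'), ?_⟩
    have h1 : ((b - Finsupp.single j 1 : Fin n →₀ ℕ)) j = b j - 1 := by
      rw [Finsupp.tsub_apply, Finsupp.single_apply, if_pos rfl]
    have h2 : b j ≤ m j := hbm' j
    rw [h1]
    omega
  · intro a ha
    obtain ⟨ham, has⟩ := Finset.mem_filter.mp ha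
    have ham' : a ≤ m := Finset.mem_Iic.mp ham
    refine Finset.mem_filter.mpr ⟨Finset.mem_Iic.mpr ?_, ?_⟩
    · intro x
      rcases eq_or_ne x j with rfl | hxj
      · have : ((a + Finsupp.single x 1 : Fin n →₀ ℕ)) x = a x + 1 := by
          rw [Finsupp.add_apply, Finsupp.single_apply, if_pos rfl]
        rw [this]
        omega
      · have : ((a + Finsupp.single j 1 : Fin n →₀ ℕ)) x = a x := by
          rw [Finsupp.add_apply, Finsupp.single_apply, if_neg (Ne.symm hxj)]
          omega
        rw [this]
        exact ham' x
    · refine Finsupp.mem_support_iff.mpr ?_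
      rw [Finsupp.add_apply, Finsupp.single_apply, if_pos rfl]
      omega
  · intro b hb
    obtain ⟨-, hbs⟩ := Finset.mem_filter.mp hb
    exact sub_add_cancel'' b j (Finsupp.mem_support_iff.mp hbs)
  · intro a _
    exact add_sub_cancel'' a j
  · intro b hb
    obtain ⟨-, hbs⟩ := Finset.mem_filter.mp hb
    have hbj : b j ≠ 0 := Finsupp.mem_support_iff.mp hbs
    have hfac := fac_add_single (b - Finsupp.single j 1) j
    rw [sub_add_cancel'' b j hbj] at hfac
    rw [sub_add_cancel'' b j hbj, hfac]
    push_cast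
    ring

lemma pairing (m : Fin n →₀ ℕ) (f : MvPolynomial (Fin n) K) (w : (Fin n →₀ ℕ) → K)
    (hw : ∀ b, w b ≠ 0 → b ≤ m) :
    ∑ b ∈ Finset.Iic m, (fac b : K) * coeff b ((∑ j : Fin n, X j) * f) * w b
      = ∑ a ∈ Finset.Iic m, (fac a : K) * coeff a f * Dop n K w a := by
  classical
  calc ∑ b ∈ Finset.Iic m, (fac b : K) * coeff b ((∑ j : Fin n, X j) * f) * w b
      = ∑ b ∈ Finset.Iic m, ∑ j : Fin n, (if j ∈ b.support
          then (fac b : K) * coeff (b - Finsupp.single j 1) f * w b else 0) := by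
        refine Finset.sum_congr rfl fun b _ => ?_
        rw [coeff_ell_mul, Finset.mul_sum, Finset.sum_mul]
        refine Finset.sum_congr rfl fun j _ => ?_
        split_ifs <;> simp
    _ = ∑ j : Fin n, ∑ b ∈ Finset.Iic m, (if j ∈ b.support
          then (fac b : K) * coeff (b - Finsupp.single j 1) f * w b else 0) :=
        Finset.sum_comm
    _ = ∑ j : Fin n, ∑ a ∈ Finset.Iic m, (fac a : K) * coeff a f
          * (((a j : K) + 1) * w (a + Finsupp.single j 1)) :=
        Finset.sum_congr rfl fun j _ => pairing_key m f w hw j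
    _ = ∑ a ∈ Finset.Iic m, ∑ j : Fin n, (fac a : K) * coeff a f
          * (((a j : K) + 1) * w (a + Finsupp.single j 1)) := Finset.sum_comm
    _ = ∑ a ∈ Finset.Iic m, (fac a : K) * coeff a f * Dop n K w a := by
        refine Finset.sum_congr rfl fun a _ => ?_
        rw [Dop_apply, Finset.mul_sum]

end LevelAux

open LevelAux

/-- Let `R = K[x_1,...,x_n]`, `char K = 0`, and let `I ⊆ R` be a monomial
ideal such that `A = R/I` is Artinian and level of socle degree `t` (every
homogeneous polynomial of degree `> t` is in `I`, some degree-`t` homogeneous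
polynomial is not in `I`, and every socle element of `A` is the class of a
homogeneous polynomial of degree `t`). Then for `ℓ = x_1 + ... + x_n` and any
`k < t/2`, multiplication `×ℓ : A_k → A_{k+1}` is injective. -/
theorem level_monomial_mul_injective {n : ℕ} {K : Type*} [Field K] [CharZero K]
    (I : Ideal (MvPolynomial (Fin n) K))
    (hmono : ∃ S : Set (Fin n →₀ ℕ),
      I = Ideal.span ((fun d => (monomial d (1 : K) : MvPolynomial (Fin n) K)) '' S))
    (hartinian : ∀ j : Fin n, ∃ k : ℕ, (X j : MvPolynomial (Fin n) K) ^ k ∈ I)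
    (t : ℕ)
    (htop : ∀ (f : MvPolynomial (Fin n) K) (d : ℕ), t < d → f.IsHomogeneous d → f ∈ I)
    (hsocdeg : ∃ f : MvPolynomial (Fin n) K, f.IsHomogeneous t ∧ f ∉ I)
    (hlevel : ∀ f : MvPolynomial (Fin n) K, (∀ j : Fin n, X j * f ∈ I) →
      ∃ g : MvPolynomial (Fin n) K, g.IsHomogeneous t ∧ f - g ∈ I) :
    ∀ k : ℕ, 2 * k < t → ∀ f : MvPolynomial (Fin n) K, f.IsHomogeneous k →
      (∑ j : Fin n, X j) * f ∈ I → f ∈ I := by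
  intro k hk f hf hlf
  classical
  obtain ⟨S, hI⟩ := hmono
  have hmem : ∀ g : MvPolynomial (Fin n) K,
      g ∈ I ↔ ∀ d ∈ g.support, ∃ s ∈ S, s ≤ d := by
    intro g; rw [hI]; exact mem_ideal_span_monomial_image
  rw [hmem]
  intro u hu
  by_contra hPu
  have hcu : coeff u f ≠ 0 := mem_support_iff.mp hu
  have hdegu : deg u = k := by
    rw [← degree_eq_deg, Finsupp.degree_eq_weight_one]
    exact hf hcu
  -- degrees of standard monomials are at most t
  have hbound : ∀ v : Fin n →₀ ℕ, ¬ (∃ s ∈ S, s ≤ v) → deg v ≤ t := by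
    intro v hv
    by_contra hgt
    have hhom : (monomial v (1:K)).IsHomogeneous (deg v) :=
      isHomogeneous_monomial 1 (degree_eq_deg v)
    have hmemI : monomial v (1:K) ∈ I := htop _ _ (by omega) hhom
    rw [hmem] at hmemI
    refine hv (hmemI v ?_)
    rw [mem_support_iff, coeff_monomial, if_pos rfl]
    exact one_ne_zero
  -- find a maximal standard multiple v of u
  set Q : ℕ → Prop := fun d => ∃ v, u ≤ v ∧ ¬ (∃ s ∈ S, s ≤ v) ∧ deg v = d with hQ
  have hQk : Q k := ⟨u, le_refl u, hPu, hdegu⟩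
  have hkt : k ≤ t := by omega
  obtain ⟨v, huv, hPv, hdv⟩ := Nat.findGreatest_spec (P := Q) hkt hQk
  have hmax : ∀ i : Fin n, ∃ s ∈ S, s ≤ v + Finsupp.single i 1 := by
    intro i
    by_contra hni
    have hQ' : Q (Nat.findGreatest Q t + 1) :=
      ⟨v + Finsupp.single i 1, le_trans huv (le_add_of_nonneg_right zero_le), hni,
        by rw [deg_add_single, hdv]⟩
    have hle : Nat.findGreatest Q t + 1 ≤ t := by
      have := hbound _ hni
      rw [deg_add_single, hdv] at this
      omega
    exact Nat.findGreatest_is_greatest (Nat.lt_succ_self _) hle hQ'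
  -- v is in the socle
  have hsoc : ∀ i : Fin n, X i * monomial v (1:K) ∈ I := by
    intro i
    rw [hmem]
    intro d hd
    rw [mem_support_iff, mul_comm, coeff_mul_X'] at hd
    have hdi : i ∈ d.support := by
      by_contra h
      rw [if_neg h] at hd
      exact hd rfl
    rw [if_pos hdi, coeff_monomial] at hd
    have hdv' : v = d - Finsupp.single i 1 := by
      by_contra h
      rw [if_neg h] at hd
      exact hd rfl
    have : d = v + Finsupp.single i 1 := by
      rw [hdv']
      exact (sub_add_cancel'' d i (Finsupp.mem_support_iff.mp hdi)).symm
    rw [this]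
    exact hmax i
  obtain ⟨g, hg, hvg⟩ := hlevel (monomial v 1) hsoc
  have hdvt : deg v = t := by
    by_contra hne
    have hcog : coeff v g = 0 := by
      by_contra h
      have := hg h
      exact hne (by rw [← degree_eq_deg, Finsupp.degree_eq_weight_one]; exact this)
    have hco : coeff v (monomial v (1:K) - g) ≠ 0 := by
      rw [coeff_sub, coeff_monomial, if_pos rfl, hcog, sub_zero]
      exact one_ne_zero
    rw [hmem] at hvg
    exact hPv (hvg v (mem_support_iff.mpr hco))
  -- all coefficients of ℓ·f vanish below v
  have Hcoeff : ∀ b ∈ Finset.Iic v, coeff b ((∑ j : Fin n, X j) * f) = 0 := by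
    intro b hb
    by_contra h
    rw [hmem] at hlf
    obtain ⟨s, hs, hsb⟩ := hlf b (mem_support_iff.mpr h)
    exact hPv ⟨s, hs, le_trans hsb (Finset.mem_Iic.mp hb)⟩
  have h2k : 2 * k < deg v := by rw [hdvt]; omega
  obtain ⟨w, hwsupp, hwD⟩ := exists_w (K := K) v k h2k u ⟨huv, hdegu⟩
  have h1 : ∑ b ∈ Finset.Iic v, (fac b : K) * coeff b ((∑ j : Fin n, X j) * f) * w b
      = 0 :=
    Finset.sum_eq_zero fun b hb => by rw [Hcoeff b hb, mul_zero, zero_mul]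
  have h2 := pairing v f w (fun b hb => (hwsupp b hb).1)
  have h3 : ∑ a ∈ Finset.Iic v, (fac a : K) * coeff a f * Dop n K w a
      = (fac u : K) * coeff u f := by
    rw [Finset.sum_congr rfl (fun a _ => by rw [hwD a])]
    simp only [mul_ite, mul_one, mul_zero]
    rw [Finset.sum_ite_eq' (Finset.Iic v) u (fun a => (fac a : K) * coeff a f),
      if_pos (Finset.mem_Iic.mpr huv)]
  have hzero : (fac u : K) * coeff u f = 0 := by rw [← h3, ← h2, h1]
  rcases mul_eq_zero.mp hzero with h | h
  · exact Nat.cast_ne_zero.mpr (fac_ne_zero u) h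
  · exact hcu h
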